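/- Fix integers n ≥ 1 and k ≥ 1, and set N = kn+1 and f̂^∅(y) = k(y-1)+1 for y ∈ [n]. The number of k-Dyck tableaux |𝒯[N×n; f̂^∅]| equals the number of accessible transition structures δ on states [n] over a k-letter alphabet whose states are indexed in breadth-first order, i.e., such that, denoting for each state p by u_p the shortlex-smallest word u ∈ [k]* with δ(1, u) = p, one has that p < q implies u_p precedes u_q in shortlex order. -/

import Mathlib

open scoped Classical BigOperators

namespace ArxivAutomata

/-- For `T : Fin M → Fin n` and a row `y`, the 1-based position
`x_T(y) = min T⁻¹(y)` of the first (red) mark in row `y`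
(columns are numbered `1, …, M`). -/
noncomputable def xT {M n : ℕ} (T : Fin M → Fin n) (y : Fin n) : ℕ :=
  sInf {x : ℕ | ∃ hx : x - 1 < M, 1 ≤ x ∧ T ⟨x - 1, hx⟩ = y}

/-- A tableau in `𝒯[M × n]`: a surjection `T : [M] → [n]` whose first-preimage
function `x_T` is strictly increasing. -/
def IsTableau {M n : ℕ} (T : Fin M → Fin n) : Prop :=
  Function.Surjective T ∧ StrictMono fun y : Fin n => xT T y

/-- The finite set `𝒯[M × n]` of tableaux. -/
noncomputable def tabSet (M n : ℕ) : Finset (Fin M → Fin n) :=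
  Finset.univ.filter fun T => IsTableau T

/-- The finite set `𝒯[M × n; f]` of tableaux whose backbone is dominated by
`f : [n] → [M]` (with rows indexed by `Fin n`, `f y` bounding row `y+1`). -/
noncomputable def tabSetLe (M n : ℕ) (f : Fin n → ℕ) : Finset (Fin M → Fin n) :=
  Finset.univ.filter fun T => IsTableau T ∧ ∀ y : Fin n, xT T y ≤ f y

/-- Extension of a transition structure to words: `run δ p u = δ(p, u)`. -/
def run {n k : ℕ} (δ : Fin n → Fin k → Fin n) (p : Fin n) (u : List (Fin k)) : Fin n :=
  u.foldl δ p

/-- A transition structure is accessible if every state is reachable from the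
initial state (the state with index 0, representing state 1). -/
def Accessible {n k : ℕ} (δ : Fin n → Fin k → Fin n) : Prop :=
  ∀ q : Fin n, ∃ u : List (Fin k), run δ ⟨0, Fin.pos q⟩ u = q

/-- Strict shortlex order on words: first by length, then lexicographically. -/
def ShortlexLt {k : ℕ} (u v : List (Fin k)) : Prop :=
  u.length < v.length ∨ (u.length = v.length ∧ List.Lex (· < ·) u v)

/-- `u` is the shortlex-smallest word with `δ(i₀, u) = p`. -/
def IsMinWord {n k : ℕ} (δ : Fin n → Fin k → Fin n) (i₀ : Fin n)
    (u : List (Fin k)) (p : Fin n) : Prop :=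
  run δ i₀ u = p ∧ ∀ v : List (Fin k), run δ i₀ v = p → u = v ∨ ShortlexLt u v

/-- The states of `δ` are indexed in breadth-first order: `p < q` implies that
the shortlex-smallest word reaching `p` shortlex-precedes the one reaching `q`. -/
def BFSOrdered {n k : ℕ} (δ : Fin n → Fin k → Fin n) (i₀ : Fin n) : Prop :=
  ∀ p q : Fin n, p < q → ∀ u v : List (Fin k),
    IsMinWord δ i₀ u p → IsMinWord δ i₀ v q → ShortlexLt u v

/-! ### Shortlex basics -/

section Shortlex
variable {k : ℕ}

theorem slex_trichotomy (u v : List (Fin k)) : u = v ∨ ShortlexLt u v ∨ ShortlexLt v u := by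
  rcases Nat.lt_trichotomy u.length v.length with h | h | h
  · exact Or.inr (Or.inl (Or.inl h))
  · rcases trichotomous_of (List.Lex (· < · : Fin k → Fin k → Prop)) u v with hl | he | hl
    · exact Or.inr (Or.inl (Or.inr ⟨h, hl⟩))
    · exact Or.inl he
    · exact Or.inr (Or.inr (Or.inr ⟨h.symm, hl⟩))
  · exact Or.inr (Or.inr (Or.inl h))

theorem slex_asymm {u v : List (Fin k)} (h : ShortlexLt u v) (h' : ShortlexLt v u) : False := by
  rcases h with h | ⟨he, hl⟩ <;> rcases h' with h' | ⟨he', hl'⟩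
  · omega
  · omega
  · omega
  · exact asymm_of (List.Lex (· < · : Fin k → Fin k → Prop)) hl hl'

theorem slex_irrefl {u : List (Fin k)} (h : ShortlexLt u u) : False := slex_asymm h h

theorem slex_trans {u v w : List (Fin k)} (h : ShortlexLt u v) (h' : ShortlexLt v w) :
    ShortlexLt u w := by
  rcases h with h | ⟨he, hl⟩ <;> rcases h' with h' | ⟨he', hl'⟩
  · exact Or.inl (h.trans h')
  · exact Or.inl (he' ▸ h)
  · exact Or.inl (he ▸ h')
  · exact Or.inr ⟨he.trans he', List.lex_trans (fun h₁ h₂ => lt_trans h₁ h₂) hl hl'⟩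

theorem lex_append_last {u v : List (Fin k)} (h : List.Lex (· < ·) u v) :
    u.length = v.length → ∀ a b : Fin k, List.Lex (· < ·) (u ++ [a]) (v ++ [b]) := by
  induction h with
  | nil => intro hl; simp at hl
  | cons h ih =>
      intro hl a b
      exact List.Lex.cons (ih (by simpa using hl) a b)
  | rel h => intro _ a b; exact List.Lex.rel h

theorem slex_append {u v : List (Fin k)} (h : ShortlexLt u v) (a b : Fin k) :
    ShortlexLt (u ++ [a]) (v ++ [b]) := by
  rcases h with h | ⟨he, hl⟩
  · exact Or.inl (by simp; omega)
  · exact Or.inr ⟨by simp [he], lex_append_last hl he a b⟩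

theorem slex_append_lt (w : List (Fin k)) {a b : Fin k} (h : a < b) :
    ShortlexLt (w ++ [a]) (w ++ [b]) :=
  Or.inr ⟨by simp, List.Lex.append_left _ (List.Lex.rel h) w⟩

theorem slex_prefix (w : List (Fin k)) (a : Fin k) : ShortlexLt w (w ++ [a]) :=
  Or.inl (by simp)

def nu : List (Fin k) → ℕ
  | [] => 0
  | a :: u => ((a : ℕ) + 1) * (k + 1) ^ u.length + nu u

theorem nu_lt (u : List (Fin k)) : nu u < (k + 1) ^ u.length := by
  induction u with
  | nil => simp [nu]
  | cons a u ih =>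
      have h1 : (a : ℕ) + 2 ≤ k + 1 := by have := a.isLt; omega
      calc nu (a :: u) = ((a : ℕ) + 1) * (k + 1) ^ u.length + nu u := rfl
        _ < ((a : ℕ) + 1) * (k + 1) ^ u.length + (k + 1) ^ u.length := by omega
        _ = ((a : ℕ) + 2) * (k + 1) ^ u.length := by ring
        _ ≤ (k + 1) * (k + 1) ^ u.length := Nat.mul_le_mul_right _ h1
        _ = (k + 1) ^ (u.length + 1) := by rw [pow_succ]; ring
        _ = (k + 1) ^ (a :: u).length := by simp

theorem nu_ge (a : Fin k) (u : List (Fin k)) : (k + 1) ^ u.length ≤ nu (a :: u) := by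
  have : 1 * (k + 1) ^ u.length ≤ ((a : ℕ) + 1) * (k + 1) ^ u.length :=
    Nat.mul_le_mul_right _ (by omega)
  simp only [nu]
  omega

theorem nu_lt_of_len {u v : List (Fin k)} (h : u.length < v.length) : nu u < nu v := by
  cases v with
  | nil => simp at h
  | cons b v =>
      have h1 : nu u < (k + 1) ^ u.length := nu_lt u
      have h2 : (k + 1) ^ u.length ≤ (k + 1) ^ v.length :=
        Nat.pow_le_pow_right (by omega) (by simp at h; omega)
      have h3 := nu_ge b v
      omega

theorem nu_lt_of_lex {u v : List (Fin k)} (h : List.Lex (· < ·) u v) :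
    u.length = v.length → nu u < nu v := by
  induction h with
  | nil => intro hl; simp at hl
  | @cons a l₁ l₂ h ih =>
      intro hl
      have h1 : nu l₁ < nu l₂ := ih (by simpa using hl)
      have hlen : l₁.length = l₂.length := by simpa using hl
      simp only [nu, hlen]
      omega
  | @rel a l₁ b l₂ hab =>
      intro hl
      have hlen : l₁.length = l₂.length := by simpa using hl
      have h1 : nu l₁ < (k + 1) ^ l₁.length := nu_lt l₁
      calc nu (a :: l₁) = ((a : ℕ) + 1) * (k + 1) ^ l₁.length + nu l₁ := rfl
        _ < ((a : ℕ) + 1) * (k + 1) ^ l₁.length + (k + 1) ^ l₁.length := by omega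
        _ = ((a : ℕ) + 2) * (k + 1) ^ l₁.length := by ring
        _ ≤ ((b : ℕ) + 1) * (k + 1) ^ l₁.length := by
            refine Nat.mul_le_mul_right _ ?_
            have : (a : ℕ) < (b : ℕ) := hab
            omega
        _ = ((b : ℕ) + 1) * (k + 1) ^ l₂.length := by rw [hlen]
        _ ≤ ((b : ℕ) + 1) * (k + 1) ^ l₂.length + nu l₂ := Nat.le_add_right _ _
        _ = nu (b :: l₂) := rfl

theorem nu_lt_of_slex {u v : List (Fin k)} (h : ShortlexLt u v) : nu u < nu v := by
  rcases h with h | ⟨he, hl⟩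
  · exact nu_lt_of_len h
  · exact nu_lt_of_lex hl he

end Shortlex

/-! ### Min words -/

section Words
variable {n k : ℕ}

theorem run_append (δ : Fin n → Fin k → Fin n) (p : Fin n) (u : List (Fin k)) (a : Fin k) :
    run δ p (u ++ [a]) = δ (run δ p u) a := by
  simp [run, List.foldl_append]

theorem exists_minword (δ : Fin n → Fin k → Fin n) (i₀ q : Fin n)
    (h : ∃ w, run δ i₀ w = q) : ∃ u, IsMinWord δ i₀ u q := by
  obtain ⟨w, hw⟩ := h
  have hne : {m : ℕ | ∃ u, run δ i₀ u = q ∧ nu u = m}.Nonempty := ⟨nu w, w, hw, rfl⟩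
  obtain ⟨u, hu, hnu⟩ := Nat.sInf_mem hne
  refine ⟨u, hu, fun v hv => ?_⟩
  rcases slex_trichotomy u v with h | h | h
  · exact Or.inl h
  · exact Or.inr h
  · exfalso
    have h1 : nu v < nu u := nu_lt_of_slex h
    have h2 : sInf {m : ℕ | ∃ u, run δ i₀ u = q ∧ nu u = m} ≤ nu v := Nat.sInf_le ⟨v, hv, rfl⟩
    omega

theorem minword_unique {δ : Fin n → Fin k → Fin n} {i₀ : Fin n} {u v : List (Fin k)} {q : Fin n}
    (hu : IsMinWord δ i₀ u q) (hv : IsMinWord δ i₀ v q) : u = v := by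
  rcases hu.2 v hv.1 with h | h
  · exact h
  rcases hv.2 u hu.1 with h' | h'
  · exact h'.symm
  · exact (slex_asymm h h').elim

theorem minword_prefix {δ : Fin n → Fin k → Fin n} {i₀ : Fin n} {w : List (Fin k)} {a : Fin k}
    {q : Fin n} (h : IsMinWord δ i₀ (w ++ [a]) q) : IsMinWord δ i₀ w (run δ i₀ w) := by
  refine ⟨rfl, fun v hv => ?_⟩
  rcases slex_trichotomy w v with he | hlt | hgt
  · exact Or.inl he
  · exact Or.inr hlt
  · exfalso
    have h1 : run δ i₀ (v ++ [a]) = q := by rw [run_append, hv, ← run_append δ i₀ w a]; exact h.1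
    rcases h.2 (v ++ [a]) h1 with he | hlt
    · have hwv : w = v := by simpa using he
      subst hwv
      exact slex_irrefl hgt
    · exact slex_asymm hlt (slex_append hgt a a)

/-! ### Encoding positions -/

theorem enc_lt_of (hk : 0 < k) {p p' a a' : ℕ} (ha' : a' < k)
    (h : k * p + a < k * p' + a') : p < p' ∨ (p = p' ∧ a < a') := by
  rcases Nat.lt_trichotomy p p' with hp | hp | hp
  · exact Or.inl hp
  · subst hp; exact Or.inr ⟨rfl, by omega⟩
  · exfalso
    have h2 : k * (p' + 1) ≤ k * p := Nat.mul_le_mul_left k hp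
    rw [Nat.mul_add, Nat.mul_one] at h2
    omega

theorem enc_lt_left {p p' a a' : ℕ} (ha : a < k) (hp : p < p') :
    k * p + a < k * p' + a' := by
  have h2 : k * (p + 1) ≤ k * p' := Nat.mul_le_mul_left k hp
  rw [Nat.mul_add, Nat.mul_one] at h2
  omega

theorem enc_div (hk : 0 < k) (p : ℕ) {a : ℕ} (ha : a < k) : (k * p + a) / k = p := by
  rw [Nat.mul_add_div hk, Nat.div_eq_of_lt ha, Nat.add_zero]

theorem enc_mod (p : ℕ) {a : ℕ} (ha : a < k) : (k * p + a) % k = a := by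
  rw [Nat.mul_add_mod, Nat.mod_eq_of_lt ha]

def posSetN (δ : Fin n → Fin k → Fin n) (q : ℕ) : Set ℕ :=
  {j | ∃ (p : Fin n) (a : Fin k), ((δ p a : ℕ) = q ∧ j = k * (p : ℕ) + (a : ℕ))}

theorem posSetN_bound {δ : Fin n → Fin k → Fin n} {q j : ℕ} (h : j ∈ posSetN δ q) :
    j < k * n := by
  obtain ⟨p, a, _, rfl⟩ := h
  have := enc_lt_left (a' := 0) a.isLt p.isLt
  omega


noncomputable def mw (δ : Fin n → Fin k → Fin n) (q : ℕ) : List (Fin k) :=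
  if h : 0 < k ∧ sInf (posSetN δ q) / k < q then
    mw δ (sInf (posSetN δ q) / k) ++ [⟨sInf (posSetN δ q) % k, Nat.mod_lt _ h.1⟩]
  else []
termination_by q
decreasing_by exact h.2

theorem mw_zero (δ : Fin n → Fin k → Fin n) : mw δ 0 = [] := by
  rw [mw, dif_neg (fun h => Nat.not_lt_zero _ h.2)]

theorem mw_eq_of_pos (hk : 0 < k) {δ : Fin n → Fin k → Fin n} {m : ℕ}
    (hlt : sInf (posSetN δ m) / k < m) :
    mw δ m = mw δ (sInf (posSetN δ m) / k) ++ [⟨sInf (posSetN δ m) % k, Nat.mod_lt _ hk⟩] := by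
  rw [mw, dif_pos ⟨hk, hlt⟩]

def Cond (δ : Fin n → Fin k → Fin n) : Prop :=
  (∀ m : ℕ, m < n → 0 < m → (posSetN δ m).Nonempty) ∧
  (∀ m : ℕ, m < n → 0 < m → sInf (posSetN δ m) < k * m) ∧
  ∀ q r : ℕ, 0 < q → q < r → r < n → sInf (posSetN δ q) < sInf (posSetN δ r)

theorem cond_div_lt (hk : 0 < k) {δ : Fin n → Fin k → Fin n} (hc : Cond δ)
    {m : ℕ} (hm : m < n) (h0 : 0 < m) : sInf (posSetN δ m) / k < m :=
  (Nat.div_lt_iff_lt_mul hk).2 (by rw [Nat.mul_comm]; exact hc.2.1 m hm h0)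

theorem run_mw (hn : 0 < n) (hk : 0 < k) {δ : Fin n → Fin k → Fin n} (hc : Cond δ) :
    ∀ m : ℕ, ∀ hm : m < n, run δ ⟨0, hn⟩ (mw δ m) = ⟨m, hm⟩ := by
  intro m
  induction m using Nat.strong_induction_on with
  | _ m ih =>
    intro hm
    rcases Nat.eq_zero_or_pos m with h0 | hpos
    · subst h0
      rw [mw, dif_neg (fun h => Nat.not_lt_zero _ h.2)]
      rfl
    · obtain ⟨p, a, hpa, hj⟩ := Nat.sInf_mem (hc.1 m hm hpos)
      have hdiv : sInf (posSetN δ m) / k = (p : ℕ) := by rw [hj]; exact enc_div hk _ a.isLt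
      have hmod : sInf (posSetN δ m) % k = (a : ℕ) := by rw [hj]; exact enc_mod _ a.isLt
      have hlt : sInf (posSetN δ m) / k < m := cond_div_lt hk hc hm hpos
      rw [mw_eq_of_pos hk hlt, run_append, hdiv]
      have hrun : run δ ⟨0, hn⟩ (mw δ (p : ℕ)) = p := by
        have := ih (p : ℕ) (hdiv ▸ hlt) p.isLt
        rw [this]
      rw [hrun]
      have hL : (⟨sInf (posSetN δ m) % k, Nat.mod_lt _ hk⟩ : Fin k) = a := Fin.ext hmod
      rw [hL]
      exact Fin.ext hpa

theorem mw_slex (hn : 0 < n) (hk : 0 < k) {δ : Fin n → Fin k → Fin n} (hc : Cond δ) :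
    ∀ r : ℕ, r < n → ∀ m : ℕ, m < r → ShortlexLt (mw δ m) (mw δ r) := by
  intro r
  induction r using Nat.strong_induction_on with
  | _ r ih =>
    intro hr m hmr
    have hrpos : 0 < r := by omega
    have hltr : sInf (posSetN δ r) / k < r := cond_div_lt hk hc hr hrpos
    rcases Nat.eq_zero_or_pos m with h0 | hmpos
    · subst h0
      rw [mw_zero, mw_eq_of_pos hk hltr]
      exact Or.inl (by simp)
    · have hltm : sInf (posSetN δ m) / k < m := cond_div_lt hk hc (by omega) hmpos
      rw [mw_eq_of_pos hk hltm, mw_eq_of_pos hk hltr]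
      have hjj : sInf (posSetN δ m) < sInf (posSetN δ r) := hc.2.2 m r hmpos hmr hr
      have hdm : k * (sInf (posSetN δ m) / k) + sInf (posSetN δ m) % k
          < k * (sInf (posSetN δ r) / k) + sInf (posSetN δ r) % k := by
        rw [Nat.div_add_mod, Nat.div_add_mod]; exact hjj
      rcases enc_lt_of hk (Nat.mod_lt _ hk) hdm with hcase | ⟨heq, hmodlt⟩
      · exact slex_append (ih _ hltr (by omega) _ hcase) _ _
      · rw [heq]
        exact slex_append_lt _ (show (⟨sInf (posSetN δ m) % k, Nat.mod_lt _ hk⟩ : Fin k)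
          < ⟨sInf (posSetN δ r) % k, Nat.mod_lt _ hk⟩ from hmodlt)

theorem mw_min (hn : 0 < n) (hk : 0 < k) {δ : Fin n → Fin k → Fin n} (hc : Cond δ) :
    ∀ (w : List (Fin k)) (q : Fin n), run δ ⟨0, hn⟩ w = q →
      mw δ (q : ℕ) = w ∨ ShortlexLt (mw δ (q : ℕ)) w := by
  intro w
  induction w using List.reverseRecOn with
  | nil =>
      intro q hq
      left
      have hq0 : q = ⟨0, hn⟩ := hq.symm
      rw [hq0]
      exact mw_zero δ
  | append_singleton w' a ih =>
      intro q hq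
      have hq' : δ (run δ ⟨0, hn⟩ w') a = q := by
        rw [← run_append δ ⟨0, hn⟩ w' a]; exact hq
      have hIH := ih (run δ ⟨0, hn⟩ w') rfl
      rcases Nat.eq_zero_or_pos (q : ℕ) with h0 | hqpos
      · right
        have hz : mw δ (q : ℕ) = [] := by rw [h0]; exact mw_zero δ
        rw [hz]
        exact Or.inl (by simp)
      · have hmem : k * ((run δ ⟨0, hn⟩ w' : Fin n) : ℕ) + (a : ℕ) ∈ posSetN δ (q : ℕ) :=
          ⟨run δ ⟨0, hn⟩ w', a, by rw [hq'], rfl⟩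
        have hinf_le : sInf (posSetN δ (q : ℕ)) ≤ k * ((run δ ⟨0, hn⟩ w' : Fin n) : ℕ) + (a : ℕ) :=
          Nat.sInf_le hmem
        have hltq : sInf (posSetN δ (q : ℕ)) / k < (q : ℕ) := cond_div_lt hk hc q.isLt hqpos
        rw [mw_eq_of_pos hk hltq]
        rcases eq_or_lt_of_le hinf_le with heq | hlt
        · have hd : sInf (posSetN δ (q : ℕ)) / k = ((run δ ⟨0, hn⟩ w' : Fin n) : ℕ) := by
            rw [heq]; exact enc_div hk _ a.isLt
          have hm2 : (⟨sInf (posSetN δ (q : ℕ)) % k, Nat.mod_lt _ hk⟩ : Fin k) = a :=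
            Fin.ext (by rw [heq]; exact enc_mod _ a.isLt)
          rw [hd, hm2]
          rcases hIH with he | hslex
          · left; rw [he]
          · right; exact slex_append hslex a a
        · right
          have hdm : k * (sInf (posSetN δ (q : ℕ)) / k) + sInf (posSetN δ (q : ℕ)) % k
              < k * ((run δ ⟨0, hn⟩ w' : Fin n) : ℕ) + (a : ℕ) := by
            rw [Nat.div_add_mod]; exact hlt
          have step : ShortlexLt
              (mw δ (sInf (posSetN δ (q : ℕ)) / k) ++ [⟨sInf (posSetN δ (q : ℕ)) % k, Nat.mod_lt _ hk⟩])
              (mw δ ((run δ ⟨0, hn⟩ w' : Fin n) : ℕ) ++ [a]) := by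
            rcases enc_lt_of hk a.isLt hdm with hcase | ⟨heq2, hmod2⟩
            · exact slex_append (mw_slex hn hk hc _ (run δ ⟨0, hn⟩ w').isLt _ hcase) _ _
            · rw [heq2]
              exact slex_append_lt _
                (show (⟨sInf (posSetN δ (q : ℕ)) % k, Nat.mod_lt _ hk⟩ : Fin k) < a from hmod2)
          rcases hIH with he | hslex
          · rw [← he]; exact step
          · exact slex_trans step (slex_append hslex a a)

theorem cond_to_auto (hn : 0 < n) (hk : 0 < k) {δ : Fin n → Fin k → Fin n} (hc : Cond δ) :
    Accessible δ ∧ BFSOrdered δ ⟨0, hn⟩ := by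
  have hmin : ∀ q : Fin n, IsMinWord δ ⟨0, hn⟩ (mw δ (q : ℕ)) q := fun q =>
    ⟨run_mw hn hk hc (q : ℕ) q.isLt, fun v hv => mw_min hn hk hc v q hv⟩
  constructor
  · intro q
    exact ⟨mw δ (q : ℕ), (hmin q).1⟩
  · intro p q hpq u v hu hv
    rw [minword_unique hu (hmin p), minword_unique hv (hmin q)]
    exact mw_slex hn hk hc (q : ℕ) q.isLt (p : ℕ) hpq

theorem auto_to_cond (hn : 0 < n) (hk : 0 < k) {δ : Fin n → Fin k → Fin n}
    (ha : Accessible δ) (hb : BFSOrdered δ ⟨0, hn⟩) : Cond δ := by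
  have hex : ∀ q : Fin n, ∃ u, IsMinWord δ ⟨0, hn⟩ u q := fun q =>
    exists_minword δ _ q (ha q)
  choose U hU using hex
  have key : ∀ q : Fin n, 0 < (q : ℕ) → ∃ (p : Fin n) (a : Fin k),
      δ p a = q ∧ U q = U p ++ [a] ∧ (p : ℕ) < (q : ℕ) ∧
      sInf (posSetN δ (q : ℕ)) = k * (p : ℕ) + (a : ℕ) := by
    intro q hq
    have hne : U q ≠ [] := by
      intro h
      have h2 : run δ ⟨0, hn⟩ (U q) = ⟨0, hn⟩ := by rw [h]; rfl
      rw [(hU q).1] at h2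
      have := congrArg Fin.val h2
      simp at this
      omega
    obtain ⟨w, a, hwa⟩ := (List.eq_nil_or_concat (U q)).resolve_left hne
    rw [List.concat_eq_append] at hwa
    have hpa : δ (run δ ⟨0, hn⟩ w) a = q := by
      rw [← run_append δ ⟨0, hn⟩ w a, ← hwa]; exact (hU q).1
    have hwmin : IsMinWord δ ⟨0, hn⟩ w (run δ ⟨0, hn⟩ w) := minword_prefix (hwa ▸ hU q)
    have hUp : U (run δ ⟨0, hn⟩ w) = w := minword_unique (hU _) hwmin
    set p := run δ ⟨0, hn⟩ w with hpdef
    have hplt : (p : ℕ) < (q : ℕ) := by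
      rcases Nat.lt_trichotomy (p : ℕ) (q : ℕ) with h | h | h
      · exact h
      · exfalso
        have hpq : p = q := Fin.ext h
        have h2 : w ++ [a] = w := by rw [← hwa, ← hUp, hpq]
        simpa using h2
      · exfalso
        have hslex := hb q p (show q < p from h) (U q) (U p) (hU q) (hU p)
        rw [hwa, hUp] at hslex
        exact slex_asymm hslex (slex_prefix w a)
    have hmem : k * (p : ℕ) + (a : ℕ) ∈ posSetN δ (q : ℕ) := ⟨p, a, by rw [hpa], rfl⟩
    have hlb : ∀ j ∈ posSetN δ (q : ℕ), k * (p : ℕ) + (a : ℕ) ≤ j := by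
      rintro j ⟨p', a', hpa', rfl⟩
      by_contra hcon
      push_neg at hcon
      have hslex : ShortlexLt (U p' ++ [a']) (U q) := by
        rw [hwa, ← hUp]
        rcases enc_lt_of hk a.isLt hcon with h | ⟨h, h2⟩
        · exact slex_append (hb p' p (show p' < p from h) _ _ (hU p') (hU p)) a' a
        · rw [show p' = p from Fin.ext h]
          exact slex_append_lt _ (show a' < a from h2)
      have hrun : run δ ⟨0, hn⟩ (U p' ++ [a']) = q := by
        rw [run_append, (hU p').1]; exact Fin.ext hpa'
      rcases (hU q).2 _ hrun with he | hl
      · rw [he] at hslex; exact slex_irrefl hslex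
      · exact slex_asymm hslex hl
    have hinf : sInf (posSetN δ (q : ℕ)) = k * (p : ℕ) + (a : ℕ) :=
      le_antisymm (Nat.sInf_le hmem) (hlb _ (Nat.sInf_mem ⟨_, hmem⟩))
    exact ⟨p, a, hpa, by rw [hwa, hUp], hplt, hinf⟩
  refine ⟨?_, ?_, ?_⟩
  · intro m hm h0
    obtain ⟨p, a, hpa, _, _, _⟩ := key ⟨m, hm⟩ h0
    exact ⟨k * (p : ℕ) + (a : ℕ), p, a, by rw [hpa], rfl⟩
  · intro m hm h0
    obtain ⟨p, a, hpa, hw, hplt, hinf⟩ := key ⟨m, hm⟩ h0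
    have hinf' : sInf (posSetN δ m) = k * (p : ℕ) + (a : ℕ) := hinf
    have hplt' : (p : ℕ) < m := hplt
    rw [hinf']
    have h3 : k * (p : ℕ) + (a : ℕ) < k * m + 0 := enc_lt_left a.isLt hplt'
    omega
  · intro q r h0 hqr hr
    have hq : q < n := by omega
    obtain ⟨p, a, hpa, hw, hplt, hinf⟩ := key ⟨q, hq⟩ h0
    obtain ⟨p', a', hpa', hw', hplt', hinf'⟩ := key ⟨r, hr⟩ (show 0 < r by omega)
    have h1 : sInf (posSetN δ q) = k * (p : ℕ) + (a : ℕ) := hinf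
    have h2 : sInf (posSetN δ r) = k * (p' : ℕ) + (a' : ℕ) := hinf'
    rw [h1, h2]
    have hQR : ShortlexLt (U ⟨q, hq⟩) (U ⟨r, hr⟩) :=
      hb _ _ (show (⟨q, hq⟩ : Fin n) < ⟨r, hr⟩ from hqr) _ _ (hU _) (hU _)
    rcases Nat.lt_trichotomy (k * (p : ℕ) + (a : ℕ)) (k * (p' : ℕ) + (a' : ℕ)) with h | h | h
    · exact h
    · exfalso
      have hpp : (p : ℕ) = (p' : ℕ) := by
        have := congrArg (· / k) h
        simpa [enc_div hk _ a.isLt, enc_div hk _ a'.isLt] using this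
      have haa : (a : ℕ) = (a' : ℕ) := by
        have := congrArg (· % k) h
        simpa [enc_mod _ a.isLt, enc_mod _ a'.isLt] using this
      have : (⟨q, hq⟩ : Fin n) = ⟨r, hr⟩ := by
        rw [← hpa, ← hpa', Fin.ext hpp, Fin.ext haa]
      have := congrArg Fin.val this
      simp at this
      omega
    · exfalso
      have hslex2 : ShortlexLt (U ⟨r, hr⟩) (U ⟨q, hq⟩) := by
        rw [hw, hw']
        rcases enc_lt_of hk a.isLt h with hc2 | ⟨hc2, hc3⟩
        · exact slex_append (hb p' p (show p' < p from hc2) _ _ (hU p') (hU p)) _ _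
        · rw [show p' = p from Fin.ext hc2]
          exact slex_append_lt _ (show a' < a from hc3)
      exact slex_asymm hQR hslex2


/-! ### The map between transition structures and tableaux -/

noncomputable def Phi (hn : 0 < n) (hk : 0 < k) (δ : Fin n → Fin k → Fin n) :
    Fin (k * n + 1) → Fin n := fun i =>
  if h : (i : ℕ) = 0 then ⟨0, hn⟩
  else
    δ ⟨((i : ℕ) - 1) / k, by
        have h2 := i.isLt
        exact Nat.div_lt_of_lt_mul (by omega)⟩
      ⟨((i : ℕ) - 1) % k, Nat.mod_lt _ hk⟩

theorem Phi_zero (hn : 0 < n) (hk : 0 < k) (δ : Fin n → Fin k → Fin n)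
    (i : Fin (k * n + 1)) (h : (i : ℕ) = 0) : Phi hn hk δ i = ⟨0, hn⟩ := dif_pos h

theorem Phi_pos (hn : 0 < n) (hk : 0 < k) (δ : Fin n → Fin k → Fin n)
    (i : Fin (k * n + 1)) (h : (i : ℕ) ≠ 0) (p : Fin n) (a : Fin k)
    (hd : ((i : ℕ) - 1) / k = (p : ℕ)) (hm : ((i : ℕ) - 1) % k = (a : ℕ)) :
    Phi hn hk δ i = δ p a := by
  show dite _ _ _ = _
  rw [dif_neg h]
  exact congrArg₂ δ (Fin.ext hd) (Fin.ext hm)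

theorem xT_Phi_zero (hn : 0 < n) (hk : 0 < k) (δ : Fin n → Fin k → Fin n)
    (y : Fin n) (hy : (y : ℕ) = 0) : xT (Phi hn hk δ) y = 1 := by
  have mem1 : (1 : ℕ) ∈ {x : ℕ | ∃ hx : x - 1 < k * n + 1, 1 ≤ x ∧ Phi hn hk δ ⟨x - 1, hx⟩ = y} := by
    refine ⟨by omega, le_refl 1, ?_⟩
    exact (Phi_zero hn hk δ _ rfl).trans (Fin.ext hy.symm)
  refine le_antisymm (Nat.sInf_le mem1) (le_csInf ⟨1, mem1⟩ ?_)
  rintro b ⟨hb1, hb2, hb3⟩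
  exact hb2

theorem Phi_apply_succ (hn : 0 < n) (hk : 0 < k) (δ : Fin n → Fin k → Fin n)
    (j : ℕ) (hj : j < k * n) :
    Phi hn hk δ ⟨j + 1, by omega⟩
      = δ ⟨j / k, Nat.div_lt_of_lt_mul (by omega)⟩ ⟨j % k, Nat.mod_lt _ hk⟩ := by
  refine Phi_pos hn hk δ _ (Nat.succ_ne_zero _) _ _ ?_ ?_
  · show (j + 1 - 1) / k = j / k
    rw [Nat.add_sub_cancel]
  · show (j + 1 - 1) % k = j % k
    rw [Nat.add_sub_cancel]

theorem xT_Phi_pos (hn : 0 < n) (hk : 0 < k) (δ : Fin n → Fin k → Fin n)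
    (y : Fin n) (hy : 0 < (y : ℕ)) (hne : (posSetN δ (y : ℕ)).Nonempty) :
    xT (Phi hn hk δ) y = sInf (posSetN δ (y : ℕ)) + 2 := by
  obtain ⟨p, a, hpa, hj⟩ := Nat.sInf_mem hne
  have hjlt : sInf (posSetN δ (y : ℕ)) < k * n := posSetN_bound (Nat.sInf_mem hne)
  have h4 : δ (⟨sInf (posSetN δ (y : ℕ)) / k, Nat.div_lt_of_lt_mul (by omega)⟩ : Fin n)
      (⟨sInf (posSetN δ (y : ℕ)) % k, Nat.mod_lt _ hk⟩ : Fin k) = y := by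
    have hdv : (⟨sInf (posSetN δ (y : ℕ)) / k, Nat.div_lt_of_lt_mul (by omega)⟩ : Fin n) = p :=
      Fin.ext (by show sInf (posSetN δ (y : ℕ)) / k = (p : ℕ); rw [hj]; exact enc_div hk _ a.isLt)
    have hmv : (⟨sInf (posSetN δ (y : ℕ)) % k, Nat.mod_lt _ hk⟩ : Fin k) = a :=
      Fin.ext (by show sInf (posSetN δ (y : ℕ)) % k = (a : ℕ); rw [hj]; exact enc_mod _ a.isLt)
    rw [hdv, hmv]
    exact Fin.ext hpa
  have hmem : (sInf (posSetN δ (y : ℕ)) + 2) ∈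
      {x : ℕ | ∃ hx : x - 1 < k * n + 1, 1 ≤ x ∧ Phi hn hk δ ⟨x - 1, hx⟩ = y} := by
    refine ⟨by omega, by omega, ?_⟩
    exact (Phi_apply_succ hn hk δ _ hjlt).trans h4
  refine le_antisymm (Nat.sInf_le hmem) (le_csInf ⟨_, hmem⟩ ?_)
  rintro x ⟨hx1, hx2, hx3⟩
  by_contra hcon
  push_neg at hcon
  rcases eq_or_lt_of_le hx2 with h1 | h2
  · rw [Phi_zero hn hk δ _ (show x - 1 = 0 by omega)] at hx3
    have := congrArg Fin.val hx3
    simp at this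
    omega
  · have hx2' : 2 ≤ x := h2
    have hjx : x - 2 < k * n := by omega
    have hfin : (⟨x - 1, hx1⟩ : Fin (k * n + 1)) = ⟨x - 2 + 1, by omega⟩ :=
      Fin.ext (show x - 1 = x - 2 + 1 by omega)
    rw [hfin, Phi_apply_succ hn hk δ _ hjx] at hx3
    have hxmem : x - 2 ∈ posSetN δ (y : ℕ) := by
      refine ⟨_, _, by rw [hx3], ?_⟩
      show x - 2 = k * ((x - 2) / k) + (x - 2) % k
      rw [Nat.div_add_mod]
    have := Nat.sInf_le hxmem
    omega

noncomputable def Psi (T : Fin (k * n + 1) → Fin n) : Fin n → Fin k → Fin n :=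
  fun p a => T ⟨k * (p : ℕ) + (a : ℕ) + 1, by
    have : k * (p : ℕ) + (a : ℕ) < k * n + 0 := enc_lt_left a.isLt p.isLt
    omega⟩

theorem Psi_Phi (hn : 0 < n) (hk : 0 < k) (δ : Fin n → Fin k → Fin n) :
    Psi (Phi hn hk δ) = δ := by
  funext p a
  show Phi hn hk δ ⟨k * (p : ℕ) + (a : ℕ) + 1, _⟩ = δ p a
  refine Phi_pos hn hk δ _ (Nat.succ_ne_zero _) p a ?_ ?_
  · show (k * (p : ℕ) + (a : ℕ) + 1 - 1) / k = (p : ℕ)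
    rw [Nat.add_sub_cancel]
    exact enc_div hk _ a.isLt
  · show (k * (p : ℕ) + (a : ℕ) + 1 - 1) % k = (a : ℕ)
    rw [Nat.add_sub_cancel]
    exact enc_mod _ a.isLt

theorem Phi_Psi (hn : 0 < n) (hk : 0 < k) (T : Fin (k * n + 1) → Fin n)
    (hT0 : T ⟨0, by omega⟩ = ⟨0, hn⟩) : Phi hn hk (Psi T) = T := by
  funext i
  rcases Nat.eq_zero_or_pos (i : ℕ) with h0 | hpos
  · rw [Phi_zero hn hk _ i h0, show i = ⟨0, by omega⟩ from Fin.ext h0, hT0]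
  · have hjlt : (i : ℕ) - 1 < k * n := by have := i.isLt; omega
    have hdlt : ((i : ℕ) - 1) / k < n := Nat.div_lt_of_lt_mul (by omega)
    have h1 := Phi_pos hn hk (Psi T) i (by omega) ⟨((i : ℕ) - 1) / k, hdlt⟩
      ⟨((i : ℕ) - 1) % k, Nat.mod_lt _ hk⟩ rfl rfl
    rw [h1]
    show T ⟨k * (((i : ℕ) - 1) / k) + ((i : ℕ) - 1) % k + 1, _⟩ = T i
    congr 1
    refine Fin.ext ?_
    show k * (((i : ℕ) - 1) / k) + ((i : ℕ) - 1) % k + 1 = (i : ℕ)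
    rw [Nat.div_add_mod]
    omega

theorem T_zero (hn : 0 < n) (hk : 0 < k) {T : Fin (k * n + 1) → Fin n}
    (hT : T ∈ tabSetLe (k * n + 1) n (fun y : Fin n => k * (y : ℕ) + 1)) :
    T ⟨0, by omega⟩ = ⟨0, hn⟩ := by
  rw [tabSetLe, Finset.mem_filter] at hT
  obtain ⟨-, ⟨hsurj, -⟩, hbound⟩ := hT
  have hb := hbound ⟨0, hn⟩
  obtain ⟨i, hi⟩ := hsurj ⟨0, hn⟩
  have hmem : ((i : ℕ) + 1) ∈
      {x : ℕ | ∃ hx : x - 1 < k * n + 1, 1 ≤ x ∧ T ⟨x - 1, hx⟩ = ⟨0, hn⟩} := by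
    refine ⟨by have := i.isLt; omega, by omega, ?_⟩
    have : (⟨(i : ℕ) + 1 - 1, by have := i.isLt; omega⟩ : Fin (k * n + 1)) = i :=
      Fin.ext (show (i : ℕ) + 1 - 1 = (i : ℕ) by omega)
    rw [this]
    exact hi
  have hb2 : xT T ⟨0, hn⟩ ≤ k * 0 + 1 := hb
  have hb' : xT T ⟨0, hn⟩ ≤ 1 := by omega
  rw [xT] at hb'
  have hinf_mem := Nat.sInf_mem ⟨_, hmem⟩
  obtain ⟨hx1, hx2, hx3⟩ := hinf_mem
  have heq : sInf {x : ℕ | ∃ hx : x - 1 < k * n + 1, 1 ≤ x ∧ T ⟨x - 1, hx⟩ = ⟨0, hn⟩} = 1 :=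
    le_antisymm hb' hx2
  have : (⟨sInf {x : ℕ | ∃ hx : x - 1 < k * n + 1, 1 ≤ x ∧ T ⟨x - 1, hx⟩ = ⟨0, hn⟩} - 1, hx1⟩ :
      Fin (k * n + 1)) = ⟨0, by omega⟩ :=
    Fin.ext (show sInf {x : ℕ | ∃ hx : x - 1 < k * n + 1, 1 ≤ x ∧ T ⟨x - 1, hx⟩ = ⟨0, hn⟩} - 1
      = 0 by omega)
  rw [this] at hx3
  exact hx3


theorem mem_iff_cond (hn : 0 < n) (hk : 0 < k) (δ : Fin n → Fin k → Fin n) :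
    Phi hn hk δ ∈ tabSetLe (k * n + 1) n (fun y : Fin n => k * (y : ℕ) + 1) ↔ Cond δ := by
  rw [tabSetLe, Finset.mem_filter]
  simp only [Finset.mem_univ, true_and]
  constructor
  · rintro ⟨⟨hsurj, hmono⟩, hbound⟩
    have hhit : ∀ m : ℕ, m < n → 0 < m → (posSetN δ m).Nonempty := by
      intro m hm h0
      obtain ⟨i, hi⟩ := hsurj ⟨m, hm⟩
      have hi0 : (i : ℕ) ≠ 0 := by
        intro h
        rw [Phi_zero hn hk δ i h] at hi
        have := congrArg Fin.val hi
        simp at this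
        omega
      have hjlt : (i : ℕ) - 1 < k * n := by have := i.isLt; omega
      have hfin : i = ⟨(i : ℕ) - 1 + 1, by omega⟩ :=
        Fin.ext (show (i : ℕ) = (i : ℕ) - 1 + 1 by omega)
      rw [hfin, Phi_apply_succ hn hk δ _ hjlt] at hi
      exact ⟨k * (((i : ℕ) - 1) / k) + ((i : ℕ) - 1) % k, _, _, by rw [hi], rfl⟩
    refine ⟨hhit, ?_, ?_⟩
    · intro m hm h0
      have hb := hbound ⟨m, hm⟩
      rw [xT_Phi_pos hn hk δ ⟨m, hm⟩ h0 (hhit m hm h0)] at hb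
      have hb' : sInf (posSetN δ m) + 2 ≤ k * m + 1 := hb
      omega
    · intro q r h0 hqr hr
      have hq : q < n := by omega
      have hm := hmono (show (⟨q, hq⟩ : Fin n) < ⟨r, hr⟩ from hqr)
      simp only at hm
      rw [xT_Phi_pos hn hk δ ⟨q, hq⟩ h0 (hhit q hq h0),
        xT_Phi_pos hn hk δ ⟨r, hr⟩ (show 0 < r by omega) (hhit r hr (by omega))] at hm
      have hm' : sInf (posSetN δ q) + 2 < sInf (posSetN δ r) + 2 := hm
      omega
  · intro hc
    have hsurj : Function.Surjective (Phi hn hk δ) := by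
      intro y
      rcases Nat.eq_zero_or_pos (y : ℕ) with h0 | hpos
      · exact ⟨⟨0, by omega⟩, (Phi_zero hn hk δ _ rfl).trans (Fin.ext h0.symm)⟩
      · obtain ⟨p, a, hpa, hj⟩ := Nat.sInf_mem (hc.1 (y : ℕ) y.isLt hpos)
        have hjlt : sInf (posSetN δ (y : ℕ)) < k * n :=
          posSetN_bound (Nat.sInf_mem (hc.1 (y : ℕ) y.isLt hpos))
        refine ⟨⟨sInf (posSetN δ (y : ℕ)) + 1, by omega⟩, ?_⟩
        rw [Phi_apply_succ hn hk δ _ hjlt]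
        have hdv : (⟨sInf (posSetN δ (y : ℕ)) / k, Nat.div_lt_of_lt_mul (by omega)⟩ : Fin n) = p :=
          Fin.ext (by
            show sInf (posSetN δ (y : ℕ)) / k = (p : ℕ)
            rw [hj]
            exact enc_div hk _ a.isLt)
        have hmv : (⟨sInf (posSetN δ (y : ℕ)) % k, Nat.mod_lt _ hk⟩ : Fin k) = a :=
          Fin.ext (by
            show sInf (posSetN δ (y : ℕ)) % k = (a : ℕ)
            rw [hj]
            exact enc_mod _ a.isLt)
        rw [hdv, hmv]
        exact Fin.ext hpa
    have hmono : StrictMono (fun y : Fin n => xT (Phi hn hk δ) y) := by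
      intro y y' hyy'
      have hvv : (y : ℕ) < (y' : ℕ) := hyy'
      show xT (Phi hn hk δ) y < xT (Phi hn hk δ) y'
      rcases Nat.eq_zero_or_pos (y : ℕ) with h0 | hpos
      · rw [xT_Phi_zero hn hk δ y h0,
          xT_Phi_pos hn hk δ y' (by omega) (hc.1 _ y'.isLt (by omega))]
        omega
      · rw [xT_Phi_pos hn hk δ y hpos (hc.1 _ y.isLt hpos),
          xT_Phi_pos hn hk δ y' (by omega) (hc.1 _ y'.isLt (by omega))]
        have := hc.2.2 (y : ℕ) (y' : ℕ) hpos hvv y'.isLt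
        omega
    refine ⟨⟨hsurj, hmono⟩, ?_⟩
    intro y
    rcases Nat.eq_zero_or_pos (y : ℕ) with h0 | hpos
    · rw [xT_Phi_zero hn hk δ y h0]
      omega
    · rw [xT_Phi_pos hn hk δ y hpos (hc.1 _ y.isLt hpos)]
      have := hc.2.1 (y : ℕ) y.isLt hpos
      omega

end Words

/-- For `n, k ≥ 1`, with `N = kn+1` and
`f̂^∅(y) = k(y-1)+1`, the number of `k`-Dyck tableaux `|𝒯[N×n; f̂^∅]|` equals
the number of accessible transition structures on `[n]` over a `k`-letter
alphabet whose states are indexed in breadth-first order. -/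
theorem statement15 (n k : ℕ) (hn : 1 ≤ n) (hk : 1 ≤ k) :
    (tabSetLe (k * n + 1) n fun y : Fin n => k * (y : ℕ) + 1).card =
      (Finset.univ.filter fun δ : Fin n → Fin k → Fin n =>
        Accessible δ ∧ BFSOrdered δ ⟨0, hn⟩).card := by
  have hn0 : 0 < n := hn
  have hk0 : 0 < k := hk
  refine Finset.card_nbij' (Psi (n := n) (k := k)) (Phi hn0 hk0) ?_ ?_ ?_ ?_
  · intro T hT
    have hPP : Phi hn0 hk0 (Psi T) = T := Phi_Psi hn0 hk0 T (T_zero hn0 hk0 hT)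
    have hc : Cond (Psi T) := (mem_iff_cond hn0 hk0 (Psi T)).1 (by rw [hPP]; exact hT)
    obtain ⟨hacc, hbfs⟩ := cond_to_auto hn0 hk0 hc
    rw [Finset.mem_coe, Finset.mem_filter]
    exact ⟨Finset.mem_univ _, hacc, hbfs⟩
  · intro δ hδ
    rw [Finset.mem_coe, Finset.mem_filter] at hδ
    obtain ⟨-, hacc, hbfs⟩ := hδ
    exact (mem_iff_cond hn0 hk0 δ).2 (auto_to_cond hn0 hk0 hacc hbfs)
  · intro T hT
    exact Phi_Psi hn0 hk0 T (T_zero hn0 hk0 hT)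
  · intro δ hδ
    exact Psi_Phi hn0 hk0 δ

end ArxivAutomata
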